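/- Let A be a bounded normal operator on a complex Hilbert space H and B a diagonalizable d×d complex matrix (ℂ^d has a basis of eigenvectors of B). Then there exists a constant C > 0 such that for every z ∈ ℂ not in σ(A) + σ(B), the operator T − z (where T realizes A⊗1 + 1⊗B on H^d) is invertible and ‖(T − z)⁻¹‖ ≤ C / dist(z, σ(A) + σ(B)). -/

import Mathlib

open scoped Pointwise

section Aux

variable {H : Type*} [NormedAddCommGroup H] [InnerProductSpace ℂ H] [CompleteSpace H]

lemma aux_isStarNormal_sub_smul_one (A : H →L[ℂ] H) (hA : IsStarNormal A) (w : ℂ) :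
    IsStarNormal (A - w • (1 : H →L[ℂ] H)) := by
  constructor
  have h := hA.star_comm_self
  rw [commute_iff_eq] at h ⊢
  simp only [star_sub, star_smul, star_one, sub_mul, mul_sub, smul_mul_assoc, mul_smul_comm,
    one_mul, mul_one, h, smul_smul, smul_sub]
  module

/-- Resolvent bound for a normal operator: if `w ∉ σ(A)` then `A - w` is invertible and
`‖(A - w)⁻¹‖ * dist(w, σ(A)) ≤ 1`. -/
lemma aux_normal_resolvent (A : H →L[ℂ] H) (hA : IsStarNormal A) {w : ℂ}
    (hw : w ∉ spectrum ℂ A) :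
    ∃ u : (H →L[ℂ] H)ˣ, (u : H →L[ℂ] H) = A - w • (1 : H →L[ℂ] H) ∧
      ‖(↑u⁻¹ : H →L[ℂ] H)‖ * Metric.infDist w (spectrum ℂ A) ≤ 1 := by
  have hu : IsUnit (A - w • (1 : H →L[ℂ] H)) := by
    have := spectrum.notMem_iff.mp hw
    rw [Algebra.algebraMap_eq_smul_one] at this
    simpa using this.neg
  obtain ⟨u, hu'⟩ := hu
  refine ⟨u, hu', ?_⟩
  have hn : IsStarNormal (↑u : H →L[ℂ] H) := hu' ▸ aux_isStarNormal_sub_smul_one A hA w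
  have hninv : IsStarNormal (↑u⁻¹ : H →L[ℂ] H) := by
    constructor
    have h : Commute ((star u : (H →L[ℂ] H)ˣ) : H →L[ℂ] H) (u : H →L[ℂ] H) := by
      simpa [commute_iff_eq] using hn.star_comm_self
    have := (h.units_inv_left).units_inv_right
    simpa [commute_iff_eq] using this
  set D := Metric.infDist w (spectrum ℂ A) with hD
  have hD0 : 0 ≤ D := Metric.infDist_nonneg
  rcases eq_or_lt_of_le hD0 with h0 | hpos
  · simp [← h0]
  · have hspec : spectrum ℂ ((↑u⁻¹ : H →L[ℂ] H)) = (spectrum ℂ (A - w • (1 : H →L[ℂ] H)))⁻¹ := by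
      rw [← spectrum.map_inv, hu']
    have hsub : spectrum ℂ (A - w • (1 : H →L[ℂ] H)) = spectrum ℂ A - {w} := by
      rw [spectrum.sub_singleton_eq, Algebra.algebraMap_eq_smul_one]
    have hbound : ∀ k ∈ spectrum ℂ ((↑u⁻¹ : H →L[ℂ] H)), ‖k‖ ≤ 1 / D := by
      intro k hk
      rw [hspec, Set.mem_inv, hsub] at hk
      obtain ⟨a, ha, b, hb, hab⟩ := hk
      rw [Set.mem_singleton_iff] at hb
      subst hb
      have hdist : D ≤ ‖k⁻¹‖ := by
        rw [← hab]
        simpa [dist_eq_norm, norm_sub_rev] using Metric.infDist_le_dist_of_mem ha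
      rw [norm_inv] at hdist
      calc ‖k‖ = (‖k‖⁻¹)⁻¹ := by rw [inv_inv]
        _ ≤ D⁻¹ := inv_anti₀ hpos hdist
        _ = 1 / D := (one_div D).symm
    have hnorm : ‖(↑u⁻¹ : H →L[ℂ] H)‖ ≤ 1 / D := by
      have hrad : (‖(↑u⁻¹ : H →L[ℂ] H)‖₊ : ENNReal) = spectralRadius ℂ (↑u⁻¹ : H →L[ℂ] H) :=
        (IsStarNormal.spectralRadius_eq_nnnorm _).symm
      have hle : spectralRadius ℂ ((↑u⁻¹ : H →L[ℂ] H)) ≤ ENNReal.ofReal (1 / D) := by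
        refine iSup₂_le fun k hk => ?_
        have := hbound k hk
        simpa [enorm_eq_nnnorm] using ENNReal.ofReal_le_ofReal this
      rw [← hrad] at hle
      have h1d : 0 ≤ 1 / D := by positivity
      rwa [← enorm_eq_nnnorm, ← ofReal_norm, ENNReal.ofReal_le_ofReal_iff h1d] at hle
    calc ‖(↑u⁻¹ : H →L[ℂ] H)‖ * D ≤ (1 / D) * D := mul_le_mul_of_nonneg_right hnorm hD0
      _ = 1 := by field_simp

variable {d : ℕ}

/-- The block-diagonal operator on `H^d` with blocks `f i`. -/
noncomputable def phiD (f : Fin d → (H →L[ℂ] H)) :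
    PiLp 2 (fun _ : Fin d => H) →L[ℂ] PiLp 2 (fun _ : Fin d => H) :=
  ((PiLp.continuousLinearEquiv 2 ℂ (fun _ : Fin d => H)).symm.toContinuousLinearMap) ∘L
    (ContinuousLinearMap.pi fun i => (f i) ∘L ContinuousLinearMap.proj i) ∘L
    (PiLp.continuousLinearEquiv 2 ℂ (fun _ : Fin d => H)).toContinuousLinearMap

lemma phiD_apply (f : Fin d → (H →L[ℂ] H)) (x : PiLp 2 (fun _ : Fin d => H)) (i : Fin d) :
    phiD f x i = f i (x i) := rfl

/-- The operator `1 ⊗ M` on `H^d` induced by a matrix `M`. -/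
noncomputable def phiM (M : Matrix (Fin d) (Fin d) ℂ) :
    PiLp 2 (fun _ : Fin d => H) →L[ℂ] PiLp 2 (fun _ : Fin d => H) :=
  ((PiLp.continuousLinearEquiv 2 ℂ (fun _ : Fin d => H)).symm.toContinuousLinearMap) ∘L
    (ContinuousLinearMap.pi fun i => ∑ j, M i j • ContinuousLinearMap.proj j) ∘L
    (PiLp.continuousLinearEquiv 2 ℂ (fun _ : Fin d => H)).toContinuousLinearMap

lemma phiM_apply (M : Matrix (Fin d) (Fin d) ℂ) (x : PiLp 2 (fun _ : Fin d => H)) (i : Fin d) :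
    phiM M x i = ∑ j, M i j • x j := by
  simp [phiM, ContinuousLinearMap.pi_apply, ContinuousLinearMap.sum_apply]

lemma clm_ext_piLp {S T : PiLp 2 (fun _ : Fin d => H) →L[ℂ] PiLp 2 (fun _ : Fin d => H)}
    (h : ∀ x i, S x i = T x i) : S = T :=
  ContinuousLinearMap.ext fun x => PiLp.ext fun i => h x i

lemma phiD_mul (f g : Fin d → (H →L[ℂ] H)) :
    phiD f * phiD g = phiD (fun i => f i * g i) := by
  refine clm_ext_piLp fun x i => ?_
  simp [ContinuousLinearMap.mul_apply, phiD_apply]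

lemma phiD_one : phiD (fun _ : Fin d => (1 : H →L[ℂ] H)) = 1 := by
  refine clm_ext_piLp fun x i => ?_
  simp [phiD_apply]

lemma phiM_mul (M N : Matrix (Fin d) (Fin d) ℂ) :
    phiM (H := H) M * phiM N = phiM (M * N) := by
  refine clm_ext_piLp fun x i => ?_
  simp only [ContinuousLinearMap.mul_apply, phiM_apply, Finset.smul_sum, smul_smul,
    Matrix.mul_apply, Finset.sum_smul]
  rw [Finset.sum_comm]

lemma phiM_one : phiM (H := H) (1 : Matrix (Fin d) (Fin d) ℂ) = 1 := by
  refine clm_ext_piLp fun x i => ?_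
  simp only [phiM_apply, Matrix.one_apply, ite_smul, one_smul, zero_smul]
  rw [Finset.sum_ite_eq Finset.univ i]
  simp

lemma phiD_norm_le (f : Fin d → (H →L[ℂ] H)) {c : ℝ} (hc : 0 ≤ c) (h : ∀ i, ‖f i‖ ≤ c) :
    ‖phiD f‖ ≤ c := by
  refine ContinuousLinearMap.opNorm_le_bound _ hc fun x => ?_
  rw [PiLp.norm_eq_of_L2, PiLp.norm_eq_of_L2]
  calc √(∑ i, ‖phiD f x i‖ ^ 2) ≤ √(∑ i, (c * ‖x i‖) ^ 2) := by
        refine Real.sqrt_le_sqrt (Finset.sum_le_sum fun i _ => ?_)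
        refine pow_le_pow_left₀ (norm_nonneg _) ?_ 2
        rw [phiD_apply]
        exact ((f i).le_opNorm (x i)).trans (by gcongr; exact h i)
    _ = c * √(∑ i, ‖x i‖ ^ 2) := by
        rw [← Real.sqrt_sq hc, ← Real.sqrt_mul (sq_nonneg c), Finset.mul_sum]
        congr 1
        refine Finset.sum_congr rfl fun i _ => ?_
        rw [Real.sqrt_sq hc]
        ring

end Aux

set_option maxHeartbeats 1000000
set_option synthInstance.maxHeartbeats 800000

/-- **Tensor-spectrum lemma, semisimple resolvent estimate (case n = 1).**
Let `A` be a bounded normal operator on a complex Hilbert space `H` and `B` a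
diagonalizable `d × d` complex matrix (`ℂ^d` has a basis of eigenvectors of `B`).
Then there is `C > 0` such that for every `z ∉ σ(A) + σ(B)` the operator `T - z`
(where `T` realizes `A ⊗ 1 + 1 ⊗ B` on `H^d`) is invertible with
`‖(T - z)⁻¹‖ ≤ C / dist(z, σ(A) + σ(B))`. -/
theorem resolvent_bound_tensor_sum_normal_diagonalizable
    {H : Type*} [NormedAddCommGroup H] [InnerProductSpace ℂ H] [CompleteSpace H]
    (A : H →L[ℂ] H) (hA : IsStarNormal A)
    (d : ℕ) (hd : 1 ≤ d) (B : Matrix (Fin d) (Fin d) ℂ)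
    (hdiag : ∃ v : Module.Basis (Fin d) ℂ (Fin d → ℂ),
      ∀ i, ∃ μ : ℂ, B.mulVecLin (v i) = μ • v i)
    (T : PiLp 2 (fun _ : Fin d => H) →L[ℂ] PiLp 2 (fun _ : Fin d => H))
    (hT : ∀ (x : PiLp 2 (fun _ : Fin d => H)) (i : Fin d),
      T x i = A (x i) + ∑ j, B i j • x j) :
    ∃ C > 0, ∀ z : ℂ, z ∉ spectrum ℂ A + spectrum ℂ B →
      IsUnit (T - z • 1) ∧
      ‖Ring.inverse (T - z • 1)‖ ≤
        C / Metric.infDist z (spectrum ℂ A + spectrum ℂ B) := by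
  classical
  by_cases htriv : Subsingleton H
  · refine ⟨1, one_pos, fun z hz => ?_⟩
    haveI : Subsingleton (PiLp 2 (fun _ : Fin d => H)) := by
      exact (WithLp.equiv 2 _).subsingleton
    refine ⟨isUnit_of_subsingleton _, ?_⟩
    have : (Ring.inverse (T - z • 1)) = 0 := Subsingleton.elim _ _
    rw [this]
    have h0 : (0:ℝ) ≤ 1 / Metric.infDist z (spectrum ℂ A + spectrum ℂ B) :=
      div_nonneg zero_le_one Metric.infDist_nonneg
    simpa using h0
  haveI : Nontrivial H := not_subsingleton_iff_nontrivial.mp htriv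
  obtain ⟨v, hv⟩ := hdiag
  choose μ hμ using hv
  haveI : Nonempty (Fin d) := ⟨⟨0, hd⟩⟩
  -- each μ i is an eigenvalue of B
  have hμB : ∀ i, μ i ∈ spectrum ℂ B := by
    intro i
    rw [← AlgEquiv.spectrum_eq (Matrix.toLinAlgEquiv' (R := ℂ) (n := Fin d)) B]
    refine (Module.End.hasEigenvalue_of_hasEigenvector ⟨?_, v.ne_zero i⟩).mem_spectrum
    rw [Module.End.mem_eigenspace_iff]
    have := hμ i
    rw [Matrix.mulVecLin_apply] at this
    exact this
  -- the change-of-basis matrix and its inverse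
  set V : Matrix (Fin d) (Fin d) ℂ := (Pi.basisFun ℂ (Fin d)).toMatrix ⇑v with hVdef
  haveI : Invertible V := (Pi.basisFun ℂ (Fin d)).invertibleToMatrix v
  have hVentry : ∀ i j, V i j = v j i := by
    intro i j
    simp [hVdef, Module.Basis.toMatrix_apply]
  have hBV : B * V = V * Matrix.diagonal μ := by
    ext i j
    rw [Matrix.mul_apply, Matrix.mul_diagonal, hVentry]
    have hthis := congrFun (hμ j) i
    simp only [Matrix.mulVecLin_apply, Pi.smul_apply, smul_eq_mul] at hthis
    calc ∑ k, B i k * V k j = B.mulVec (v j) i := by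
          simp only [Matrix.mulVec, dotProduct, hVentry]
      _ = μ j * v j i := hthis
      _ = v j i * μ j := mul_comm _ _
  -- the constant
  refine ⟨‖phiM (H := H) V‖ * ‖phiM (H := H) (⅟V)‖ + 1, by positivity, fun z hz => ?_⟩
  -- spectra and distances
  have hAne : (spectrum ℂ A).Nonempty := spectrum.nonempty A
  have hSne : (spectrum ℂ A + spectrum ℂ B).Nonempty :=
    ⟨hAne.choose + μ ⟨0, hd⟩, ⟨_, hAne.choose_spec, _, hμB ⟨0, hd⟩, rfl⟩⟩
  have hSclosed : IsClosed (spectrum ℂ A + spectrum ℂ B) :=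
    ((spectrum.isCompact A).add (Matrix.finite_spectrum B).isCompact).isClosed
  set D := Metric.infDist z (spectrum ℂ A + spectrum ℂ B) with hDdef
  have hDpos : 0 < D := (hSclosed.notMem_iff_infDist_pos hSne).mp hz
  -- resolvents of the blocks
  have hnot : ∀ i, z - μ i ∉ spectrum ℂ A := by
    intro i h
    exact hz ⟨z - μ i, h, μ i, hμB i, by ring⟩
  choose u hu hub using fun i => aux_normal_resolvent A hA (hnot i)
  have hDle : ∀ i, D ≤ Metric.infDist (z - μ i) (spectrum ℂ A) := by
    intro i
    by_contra hlt
    push_neg at hlt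
    obtain ⟨a, ha, hda⟩ := (Metric.infDist_lt_iff hAne).mp hlt
    have hmem : a + μ i ∈ spectrum ℂ A + spectrum ℂ B := ⟨a, ha, μ i, hμB i, rfl⟩
    have hge : D ≤ dist (z - μ i) a := by
      calc D ≤ dist z (a + μ i) := Metric.infDist_le_dist_of_mem hmem
        _ = dist (z - μ i) a := by
            rw [dist_eq_norm, dist_eq_norm]
            congr 1
            ring
    linarith
  have hinv_le : ∀ i, ‖(↑(u i)⁻¹ : H →L[ℂ] H)‖ ≤ 1 / D := by
    intro i
    rw [le_div_iff₀ hDpos]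
    calc ‖(↑(u i)⁻¹ : H →L[ℂ] H)‖ * D
        ≤ ‖(↑(u i)⁻¹ : H →L[ℂ] H)‖ * Metric.infDist (z - μ i) (spectrum ℂ A) :=
          mul_le_mul_of_nonneg_left (hDle i) (norm_nonneg _)
      _ ≤ 1 := hub i
  -- block diagonal operators
  set M₀ : PiLp 2 (fun _ : Fin d => H) →L[ℂ] PiLp 2 (fun _ : Fin d => H) :=
    phiD (fun i => (↑(u i) : H →L[ℂ] H)) with hM₀def
  set Sop : PiLp 2 (fun _ : Fin d => H) →L[ℂ] PiLp 2 (fun _ : Fin d => H) :=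
    phiD (fun i => (↑(u i)⁻¹ : H →L[ℂ] H)) with hSdef
  have hMS : M₀ * Sop = 1 := by
    rw [hM₀def, hSdef, phiD_mul]
    rw [show (fun i => (↑(u i) : H →L[ℂ] H) * ↑(u i)⁻¹) = fun _ => (1 : H →L[ℂ] H) from
      funext fun i => (u i).mul_inv, phiD_one]
  have hSM : Sop * M₀ = 1 := by
    rw [hM₀def, hSdef, phiD_mul]
    rw [show (fun i => (↑(u i)⁻¹ : H →L[ℂ] H) * ↑(u i)) = fun _ => (1 : H →L[ℂ] H) from
      funext fun i => (u i).inv_mul, phiD_one]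
  have hVV' : phiM (H := H) V * phiM (⅟V) = 1 := by rw [phiM_mul, mul_invOf_self, phiM_one]
  have hV'V : phiM (H := H) (⅟V) * phiM V = 1 := by rw [phiM_mul, invOf_mul_self, phiM_one]
  -- the conjugation identity
  have hconj : (T - z • 1) * phiM V = phiM V * M₀ := by
    refine clm_ext_piLp fun x i => ?_
    have hy : ∀ k, (phiM (H := H) V) x k = ∑ j, V k j • x j := fun k => phiM_apply V x k
    have hM₀x : ∀ j, (M₀ x) j = A (x j) - (z - μ j) • x j := by
      intro j
      rw [hM₀def, phiD_apply, hu j]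
      simp
    calc ((T - z • 1) * phiM (H := H) V) x i
        = T (phiM V x) i - z • ((phiM V x) i) := rfl
      _ = A ((phiM V x) i) + (∑ k, B i k • (phiM V x) k) - z • ((phiM V x) i) := by rw [hT]
      _ = ((∑ j, V i j • A (x j)) + (∑ j, (V i j * μ j) • x j)) - ∑ j, (z * V i j) • x j := by
          have h1 : A ((phiM (H := H) V) x i) = ∑ j, V i j • A (x j) := by
            rw [hy i, map_sum]
            exact Finset.sum_congr rfl fun j _ => map_smul A _ _
          have h2 : (∑ k, B i k • (phiM (H := H) V) x k) = ∑ j, (V i j * μ j) • x j := by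
            simp_rw [hy, Finset.smul_sum, smul_smul]
            rw [Finset.sum_comm]
            refine Finset.sum_congr rfl fun j _ => ?_
            rw [← Finset.sum_smul]
            have hentry : (∑ k, B i k * V k j) = V i j * μ j := by
              have h := congrFun (congrFun hBV i) j
              rw [Matrix.mul_diagonal] at h
              rw [Matrix.mul_apply] at h
              exact h
            rw [hentry]
          have h3 : z • ((phiM (H := H) V) x i) = ∑ j, (z * V i j) • x j := by
            rw [hy i, Finset.smul_sum]
            exact Finset.sum_congr rfl fun j _ => smul_smul z _ _
          rw [h1, h2, h3]
      _ = ∑ j, (V i j • A (x j) - (V i j * (z - μ j)) • x j) := by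
          rw [← Finset.sum_add_distrib, ← Finset.sum_sub_distrib]
          refine Finset.sum_congr rfl fun j _ => ?_
          module
      _ = (phiM (H := H) V * M₀) x i := by
          show _ = (phiM (H := H) V (M₀ x)) i
          rw [phiM_apply]
          refine Finset.sum_congr rfl fun j _ => ?_
          rw [hM₀x j, smul_sub, smul_smul]
  -- conjugation as units
  have hTz : (T - z • 1) = phiM V * M₀ * phiM (⅟V) := by
    calc T - z • 1 = (T - z • 1) * (phiM V * phiM (⅟V)) := by rw [hVV', mul_one]
      _ = ((T - z • 1) * phiM V) * phiM (⅟V) := by rw [mul_assoc]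
      _ = phiM V * M₀ * phiM (⅟V) := by rw [hconj]
  set Qu : (PiLp 2 (fun _ : Fin d => H) →L[ℂ] PiLp 2 (fun _ : Fin d => H))ˣ :=
    ⟨phiM V, phiM (⅟V), hVV', hV'V⟩ with hQu
  set Mu : (PiLp 2 (fun _ : Fin d => H) →L[ℂ] PiLp 2 (fun _ : Fin d => H))ˣ :=
    ⟨M₀, Sop, hMS, hSM⟩ with hMu
  have hUzval : Units.val (Qu * Mu * Qu⁻¹) = T - z • 1 := by
    rw [hTz]; rfl
  have hunit : IsUnit (T - z • 1) := ⟨Qu * Mu * Qu⁻¹, hUzval⟩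
  refine ⟨hunit, ?_⟩
  have hRinv : Ring.inverse (T - z • 1)
      = Units.val ((Qu * Mu * Qu⁻¹)⁻¹) := by
    rw [← hUzval, Ring.inverse_unit]
  have hinvval : Units.val ((Qu * Mu * Qu⁻¹)⁻¹) = phiM (H := H) V * Sop * phiM (⅟V) := by
    have : (Qu * Mu * Qu⁻¹)⁻¹ = Qu * Mu⁻¹ * Qu⁻¹ := by group
    rw [this]; rfl
  rw [hRinv, hinvval]
  -- norm estimates
  have hSnorm : ‖Sop‖ ≤ 1 / D := phiD_norm_le _ (by positivity) hinv_le
  have h1 : ‖phiM (H := H) V * Sop * phiM (⅟V)‖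
      ≤ ‖phiM (H := H) V‖ * ‖Sop‖ * ‖phiM (H := H) (⅟V)‖ := by
    refine le_trans (norm_mul_le (phiM (H := H) V * Sop) (phiM (⅟V))) ?_
    exact mul_le_mul_of_nonneg_right (norm_mul_le (phiM (H := H) V) Sop)
      (norm_nonneg (phiM (H := H) (⅟V)))
  have h2 : ‖phiM (H := H) V‖ * ‖Sop‖ * ‖phiM (H := H) (⅟V)‖
      ≤ (‖phiM (H := H) V‖ * ‖phiM (H := H) (⅟V)‖ + 1) * (1 / D) := by
    have hb : ‖phiM (H := H) V‖ * ‖phiM (H := H) (⅟V)‖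
        ≤ ‖phiM (H := H) V‖ * ‖phiM (H := H) (⅟V)‖ + 1 := le_add_of_nonneg_right zero_le_one
    have hre : ‖phiM (H := H) V‖ * ‖Sop‖ * ‖phiM (H := H) (⅟V)‖
        = (‖phiM (H := H) V‖ * ‖phiM (H := H) (⅟V)‖) * ‖Sop‖ := by ring
    rw [hre]
    exact mul_le_mul hb hSnorm (norm_nonneg Sop) (by positivity)
  exact le_trans (le_trans h1 h2) (le_of_eq (mul_one_div _ _))
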